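/- Let a₁, a₂, a₃ be positive integers with gcd(a₁,a₂,a₃)=1, set d₁ = gcd(a₂,a₃), and suppose a₂/d₁ divides a₁ or a₃/d₁ divides a₁. Then for every s ≥ 0, g(a₁, a₂, a₃; Σ_{j=0}^{s} ⌈ j·a₂a₃ / (a₁d₁²) ⌉) = (s+1)·a₂a₃/d₁ + a₁d₁ − a₁ − a₂ − a₃. -/

import Mathlib

/-- `d3 a b c n` is the number of triples `(x,y,z)` of non-negative integers
with `a*x + b*y + c*z = n`. -/
noncomputable def d3 (a b c : ℕ) (n : ℤ) : ℕ :=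
  Nat.card {p : ℕ × ℕ × ℕ // (a : ℤ) * p.1 + (b : ℤ) * p.2.1 + (c : ℤ) * p.2.2 = n}

/-- number of `u < bound` pairs per column -/
def gfun (b₃ c j : ℕ) : ℕ := (⌈(j * b₃ : ℚ) / c⌉).toNat

def Sfin (b₃ c s : ℕ) : Finset (ℕ × ℕ) :=
  (Finset.range s).biUnion fun v => (Finset.range (gfun b₃ c (s - v))).image fun u => (u, v)

lemma mem_Sfin {b₃ c s : ℕ} {q : ℕ × ℕ} :
    q ∈ Sfin b₃ c s ↔ q.2 < s ∧ q.1 < gfun b₃ c (s - q.2) := by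
  rcases q with ⟨u, v⟩
  simp only [Sfin, Finset.mem_biUnion, Finset.mem_range, Finset.mem_image]
  constructor
  · rintro ⟨v', hv', u', hu', h⟩
    obtain ⟨rfl, rfl⟩ : u' = u ∧ v' = v := by simpa [Prod.ext_iff] using h
    exact ⟨hv', hu'⟩
  · rintro ⟨h1, h2⟩
    exact ⟨v, h1, u, h2, rfl⟩

lemma card_Sfin (b₃ c s : ℕ) :
    (Sfin b₃ c s).card = ∑ j ∈ Finset.range (s + 1), gfun b₃ c j := by
  rw [Sfin, Finset.card_biUnion]
  · have h1 : ∀ v ∈ Finset.range s,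
        ((Finset.range (gfun b₃ c (s - v))).image fun u => (u, v)).card = gfun b₃ c (s - v) := by
      intro v _
      rw [Finset.card_image_of_injective _ (fun a b h => by simpa [Prod.ext_iff] using h)]
      simp
    rw [Finset.sum_congr rfl h1]
    have h2 : ∀ v ∈ Finset.range s, gfun b₃ c (s - v) = (fun i => gfun b₃ c (i + 1)) (s - 1 - v) := by
      intro v hv
      simp only [Finset.mem_range] at hv
      congr 1
      omega
    rw [Finset.sum_congr rfl h2, Finset.sum_range_reflect (fun i => gfun b₃ c (i + 1)) s,
      Finset.sum_range_succ']
    simp [gfun]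
  · intro x hx y hy hxy
    simp only [Finset.disjoint_left]
    intro q h1 h2
    obtain ⟨u, v⟩ := q
    simp only [Finset.mem_image, Finset.mem_range] at h1 h2
    obtain ⟨u1, hu1, hh⟩ := h1
    obtain ⟨u2, hu2, hh'⟩ := h2
    obtain ⟨rfl, rfl⟩ : u1 = u ∧ x = v := by simpa [Prod.ext_iff] using hh
    obtain ⟨rfl, rfl⟩ : u2 = u1 ∧ y = x := by simpa [Prod.ext_iff] using hh'
    exact hxy rfl

lemma exists_res (a m : ℕ) (hm : 0 < m) (hco : Nat.Coprime a m) (n : ℤ) :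
    ∃ x₀ : ℕ, x₀ < m ∧ (m : ℤ) ∣ n - a * x₀ := by
  haveI : NeZero m := ⟨hm.ne'⟩
  have hu : IsUnit (a : ZMod m) := (ZMod.isUnit_iff_coprime a m).2 hco
  refine ⟨(((a : ZMod m))⁻¹ * (n : ZMod m)).val, ZMod.val_lt _, ?_⟩
  have h : ((n - a * ((((a : ZMod m))⁻¹ * (n : ZMod m)).val : ℕ) : ℤ) : ZMod m) = 0 := by
    push_cast
    rw [ZMod.natCast_val, ZMod.cast_id, ← mul_assoc, ZMod.mul_inv_of_unit _ hu, one_mul, sub_self]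
  exact (ZMod.intCast_zmod_eq_zero_iff_dvd _ _).1 h

lemma sols_finite (a b c : ℕ) (ha : 0 < a) (hb : 0 < b) (hc : 0 < c) (n : ℤ) :
    Finite {p : ℕ × ℕ × ℕ // (a : ℤ) * p.1 + (b : ℤ) * p.2.1 + (c : ℤ) * p.2.2 = n} := by
  have key : ∀ p : {p : ℕ × ℕ × ℕ // (a : ℤ) * p.1 + (b : ℤ) * p.2.1 + (c : ℤ) * p.2.2 = n},
      p.1.1 ≤ n.toNat ∧ p.1.2.1 ≤ n.toNat ∧ p.1.2.2 ≤ n.toNat := by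
    rintro ⟨⟨x, y, z⟩, hp⟩
    simp only at hp
    have ha' : (1 : ℤ) ≤ a := by exact_mod_cast ha
    have hb' : (1 : ℤ) ≤ b := by exact_mod_cast hb
    have hc' : (1 : ℤ) ≤ c := by exact_mod_cast hc
    have hx : (0 : ℤ) ≤ x := Int.natCast_nonneg x
    have hy : (0 : ℤ) ≤ y := Int.natCast_nonneg y
    have hz : (0 : ℤ) ≤ z := Int.natCast_nonneg z
    have h0 : (0 : ℤ) ≤ n := by nlinarith
    refine ⟨?_, ?_, ?_⟩ <;> rw [Int.le_toNat h0] <;> nlinarith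
  exact Finite.of_injective
    (fun p => ((⟨p.1.1, Nat.lt_succ_of_le (key p).1⟩ : Fin (n.toNat + 1)),
      (⟨p.1.2.1, Nat.lt_succ_of_le (key p).2.1⟩ : Fin (n.toNat + 1)),
      (⟨p.1.2.2, Nat.lt_succ_of_le (key p).2.2⟩ : Fin (n.toNat + 1))))
    (by
      rintro ⟨⟨x, y, z⟩, hp⟩ ⟨⟨x', y', z'⟩, hp'⟩ h
      simp only [Prod.ext_iff, Fin.mk.injEq] at h
      exact Subtype.ext (by simp [Prod.ext_iff]; exact ⟨h.1, h.2.1, h.2.2⟩))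

lemma decomp (d b₂ b₃ c : ℕ) (hd : 0 < d) (hb₂ : 0 < b₂)
    (hcop1 : Nat.Coprime (b₂ * c) d) (hcop2 : Nat.Coprime b₂ b₃)
    (n : ℤ) (x₀ z₀ : ℕ) (W : ℤ) (hx₀ : x₀ < d) (hz₀ : z₀ < b₂)
    (hn : n = ((b₂ * c : ℕ) : ℤ) * x₀ + ((d * b₃ : ℕ) : ℤ) * z₀ + ((d * b₂ : ℕ) : ℤ) * W)
    (x y z : ℕ)
    (hsol : ((b₂ * c : ℕ) : ℤ) * x + ((d * b₂ : ℕ) : ℤ) * y + ((d * b₃ : ℕ) : ℤ) * z = n) :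
    ∃ u v : ℕ, x = x₀ + d * u ∧ z = z₀ + b₂ * v ∧ (c : ℤ) * u + (b₃ : ℤ) * v + y = W := by
  have hdb₂ : (0 : ℤ) < (d : ℤ) * b₂ := by positivity
  -- divisibility by d
  have h1 : (d : ℤ) ∣ n - ((b₂ * c : ℕ) : ℤ) * x₀ := ⟨(b₃ : ℤ) * z₀ + (b₂ : ℤ) * W, by
    rw [hn]; push_cast; ring⟩
  have h2 : (d : ℤ) ∣ n - ((b₂ * c : ℕ) : ℤ) * x := ⟨(b₂ : ℤ) * y + (b₃ : ℤ) * z, by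
    rw [← hsol]; push_cast; ring⟩
  have hdd : (d : ℤ) ∣ ((b₂ * c : ℕ) : ℤ) * ((x : ℤ) - x₀) := by
    have h3 := dvd_sub h1 h2
    convert h3 using 1
    · rfl
    push_cast; ring
  have hcopZ : IsCoprime ((b₂ * c : ℕ) : ℤ) (d : ℤ) := by
    rw [Int.isCoprime_iff_gcd_eq_one]
    exact (Int.gcd_natCast_natCast _ _).trans hcop1
  have hxd : (d : ℤ) ∣ (x : ℤ) - x₀ := (hcopZ.symm).dvd_of_dvd_mul_left hdd
  obtain ⟨t, ht⟩ := hxd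
  have hx₀' : (x₀ : ℤ) < d := by exact_mod_cast hx₀
  have htnn : 0 ≤ t := by
    by_contra hcon
    push_neg at hcon
    have h' : t ≤ -1 := by omega
    have h'' : (d : ℤ) * t ≤ (d : ℤ) * (-1) := by
      apply mul_le_mul_of_nonneg_left h' (by positivity)
    have hxnn : (0 : ℤ) ≤ x := Int.natCast_nonneg x
    linarith
  -- divisibility by b₂
  have g1 : (b₂ : ℤ) ∣ n - ((d * b₃ : ℕ) : ℤ) * z₀ := ⟨(c : ℤ) * x₀ + (d : ℤ) * W, by
    rw [hn]; push_cast; ring⟩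
  have g2 : (b₂ : ℤ) ∣ n - ((d * b₃ : ℕ) : ℤ) * z := ⟨(c : ℤ) * x + (d : ℤ) * y, by
    rw [← hsol]; push_cast; ring⟩
  have gdd : (b₂ : ℤ) ∣ ((d * b₃ : ℕ) : ℤ) * ((z : ℤ) - z₀) := by
    have g3 := dvd_sub g1 g2
    convert g3 using 1
    · rfl
    push_cast; ring
  have hcopZ2 : IsCoprime ((d * b₃ : ℕ) : ℤ) (b₂ : ℤ) := by
    rw [Int.isCoprime_iff_gcd_eq_one]
    have : Nat.Coprime (d * b₃) b₂ :=
      Nat.Coprime.mul ((Nat.Coprime.coprime_dvd_left (dvd_mul_right b₂ c) hcop1).symm) hcop2.symm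
    exact (Int.gcd_natCast_natCast _ _).trans this
  have hzd : (b₂ : ℤ) ∣ (z : ℤ) - z₀ := (hcopZ2.symm).dvd_of_dvd_mul_left gdd
  obtain ⟨r, hr⟩ := hzd
  have hz₀' : (z₀ : ℤ) < b₂ := by exact_mod_cast hz₀
  have hrnn : 0 ≤ r := by
    by_contra hcon
    push_neg at hcon
    have h' : r ≤ -1 := by omega
    have h'' : (b₂ : ℤ) * r ≤ (b₂ : ℤ) * (-1) := by
      apply mul_le_mul_of_nonneg_left h' (by positivity)
    have hznn : (0 : ℤ) ≤ z := Int.natCast_nonneg z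
    linarith
  refine ⟨t.toNat, r.toNat, ?_, ?_, ?_⟩
  · have hxx : (x : ℤ) = x₀ + d * (t.toNat : ℤ) := by rw [Int.toNat_of_nonneg htnn]; linarith
    exact_mod_cast hxx
  · have hzz : (z : ℤ) = z₀ + b₂ * (r.toNat : ℤ) := by rw [Int.toNat_of_nonneg hrnn]; linarith
    exact_mod_cast hzz
  · have hxx : (x : ℤ) = x₀ + d * (t.toNat : ℤ) := by rw [Int.toNat_of_nonneg htnn]; linarith
    have hzz : (z : ℤ) = z₀ + b₂ * (r.toNat : ℤ) := by rw [Int.toNat_of_nonneg hrnn]; linarith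
    have key : (d : ℤ) * b₂ * ((c : ℤ) * t.toNat + (b₃ : ℤ) * r.toNat + y)
        = (d : ℤ) * b₂ * W := by
      push_cast at hsol hn
      linear_combination hsol + hn - ((b₂ : ℤ) * c) * hxx - ((d : ℤ) * b₃) * hzz
    exact mul_left_cancel₀ (ne_of_gt hdb₂) key

lemma card_le (d b₂ b₃ c s : ℕ) (hd : 0 < d) (hb₂ : 0 < b₂) (hb₃ : 0 < b₃) (hc : 0 < c)
    (hcop1 : Nat.Coprime (b₂ * c) d) (hcop2 : Nat.Coprime b₂ b₃)
    (n : ℤ) (x₀ z₀ : ℕ) (W : ℤ) (hx₀ : x₀ < d) (hz₀ : z₀ < b₂)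
    (hn : n = ((b₂ * c : ℕ) : ℤ) * x₀ + ((d * b₃ : ℕ) : ℤ) * z₀ + ((d * b₂ : ℕ) : ℤ) * W)
    (hW : W ≤ (s : ℤ) * b₃ - 1) :
    d3 (b₂ * c) (d * b₂) (d * b₃) n ≤ ∑ j ∈ Finset.range (s + 1), gfun b₃ c j := by
  rw [d3]
  have hdec : ∀ p : {p : ℕ × ℕ × ℕ //
      ((b₂ * c : ℕ) : ℤ) * p.1 + ((d * b₂ : ℕ) : ℤ) * p.2.1 + ((d * b₃ : ℕ) : ℤ) * p.2.2 = n},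
      ∃ q : ℕ × ℕ, p.1.1 = x₀ + d * q.1 ∧ p.1.2.2 = z₀ + b₂ * q.2 ∧
        (c : ℤ) * q.1 + (b₃ : ℤ) * q.2 + p.1.2.1 = W := by
    intro p
    obtain ⟨u, v, h1, h2, h3⟩ := decomp d b₂ b₃ c hd hb₂ hcop1 hcop2 n x₀ z₀ W hx₀ hz₀ hn
      p.1.1 p.1.2.1 p.1.2.2 p.2
    exact ⟨(u, v), h1, h2, h3⟩
  choose q hq1 hq2 hq3 using hdec
  have hmem : ∀ p, q p ∈ Sfin b₃ c s := by
    intro p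
    rw [mem_Sfin]
    have h3 := hq3 p
    have hynn : (0 : ℤ) ≤ (p.1.2.1 : ℤ) := Int.natCast_nonneg _
    have hunn : (0 : ℤ) ≤ (c : ℤ) * (q p).1 := by positivity
    have hb₃' : (1 : ℤ) ≤ b₃ := by exact_mod_cast hb₃
    have hvs : ((q p).2 : ℤ) < s := by
      by_contra hcon
      push_neg at hcon
      have : (b₃ : ℤ) * s ≤ (b₃ : ℤ) * (q p).2 := by
        apply mul_le_mul_of_nonneg_left hcon (by positivity)
      nlinarith
    have hvs' : (q p).2 < s := by exact_mod_cast hvs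
    refine ⟨hvs', ?_⟩
    have hsv : ((s - (q p).2 : ℕ) : ℤ) = (s : ℤ) - (q p).2 := by
      push_cast [Nat.cast_sub hvs'.le]; ring
    have hcu : (c : ℤ) * (q p).1 < ((s - (q p).2 : ℕ) : ℤ) * b₃ := by
      rw [hsv]; nlinarith
    have hcuQ : ((q p).1 : ℚ) < ((s - (q p).2 : ℕ) : ℚ) * b₃ / c := by
      rw [lt_div_iff₀ (by exact_mod_cast hc : (0 : ℚ) < c)]
      exact_mod_cast (by linarith : ((q p).1 : ℤ) * c < ((s - (q p).2 : ℕ) : ℤ) * b₃)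
    rw [gfun]
    rw [Int.lt_toNat]
    rw [Int.lt_ceil]
    exact_mod_cast hcuQ
  have hinj : Function.Injective (fun p => (⟨q p, hmem p⟩ : {r // r ∈ Sfin b₃ c s})) := by
    intro p p' h
    simp only [Subtype.mk.injEq] at h
    have e1 : p.1.1 = p'.1.1 := by rw [hq1 p, hq1 p', h]
    have e3 : p.1.2.2 = p'.1.2.2 := by rw [hq2 p, hq2 p', h]
    have e2 : p.1.2.1 = p'.1.2.1 := by
      have := hq3 p
      have h' := hq3 p'
      rw [h] at this
      have : ((p.1.2.1 : ℤ)) = p'.1.2.1 := by linarith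
      exact_mod_cast this
    exact Subtype.ext (by
      rcases p with ⟨⟨x, y, z⟩, hp⟩
      rcases p' with ⟨⟨x', y', z'⟩, hp'⟩
      simp only at e1 e2 e3
      simp [Prod.ext_iff, e1, e2, e3])
  calc Nat.card _ ≤ Nat.card {r // r ∈ Sfin b₃ c s} := Nat.card_le_card_of_injective _ hinj
    _ = (Sfin b₃ c s).card := Nat.card_eq_finsetCard _
    _ = ∑ j ∈ Finset.range (s + 1), gfun b₃ c j := card_Sfin b₃ c s

lemma card_ge (d b₂ b₃ c s : ℕ) (hd : 0 < d) (hb₂ : 0 < b₂) (hb₃ : 0 < b₃) (hc : 0 < c)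
    (n : ℤ) (x₀ z₀ : ℕ) (W : ℤ)
    (hn : n = ((b₂ * c : ℕ) : ℤ) * x₀ + ((d * b₃ : ℕ) : ℤ) * z₀ + ((d * b₂ : ℕ) : ℤ) * W)
    (hW : (s : ℤ) * b₃ ≤ W) :
    (∑ j ∈ Finset.range (s + 1), gfun b₃ c j) + 1 ≤ d3 (b₂ * c) (d * b₂) (d * b₃) n := by
  classical
  haveI : Finite {p : ℕ × ℕ × ℕ //
      ((b₂ * c : ℕ) : ℤ) * p.1 + ((d * b₂ : ℕ) : ℤ) * p.2.1 + ((d * b₃ : ℕ) : ℤ) * p.2.2 = n} :=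
    sols_finite (b₂ * c) (d * b₂) (d * b₃) (by positivity) (by positivity) (by positivity) n
  set S' : Finset (ℕ × ℕ) := insert (0, s) (Sfin b₃ c s) with hS'
  have hnotmem : (0, s) ∉ Sfin b₃ c s := by
    rw [mem_Sfin]
    simp
  have hcard : S'.card = (∑ j ∈ Finset.range (s + 1), gfun b₃ c j) + 1 := by
    rw [hS', Finset.card_insert_of_notMem hnotmem, card_Sfin]
  -- key bound: every element of S' satisfies c*u + b₃*v ≤ W
  have hkey : ∀ r ∈ S', (c : ℤ) * r.1 + (b₃ : ℤ) * r.2 ≤ W := by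
    intro r hr
    rw [hS', Finset.mem_insert] at hr
    rcases hr with rfl | hr
    · simpa [mul_comm] using hW
    · rw [mem_Sfin] at hr
      obtain ⟨hv, hu⟩ := hr
      have hu' : (r.1 : ℤ) < ⌈(((s - r.2 : ℕ) : ℚ) * b₃) / c⌉ := by
        rw [← Int.lt_toNat]
        simpa [gfun] using hu
      have huQ : (r.1 : ℚ) < ((s - r.2 : ℕ) : ℚ) * b₃ / c := by
        exact_mod_cast Int.lt_ceil.mp hu'
      have hcu : (c : ℤ) * r.1 < ((s - r.2 : ℕ) : ℤ) * b₃ := by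
        have : (r.1 : ℚ) * c < ((s - r.2 : ℕ) : ℚ) * b₃ := by
          rw [← lt_div_iff₀ (by exact_mod_cast hc : (0 : ℚ) < c)]
          exact huQ
        exact_mod_cast (by linarith : (c : ℚ) * r.1 < ((s - r.2 : ℕ) : ℚ) * b₃)
      have hsv : ((s - r.2 : ℕ) : ℤ) = (s : ℤ) - r.2 := by
        push_cast [Nat.cast_sub hv.le]; ring
      rw [hsv] at hcu
      linarith
  -- the injection from S' into the solution set
  have hy : ∀ r : {r // r ∈ S'}, ((W - (c : ℤ) * r.1.1 - (b₃ : ℤ) * r.1.2).toNat : ℤ)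
      = W - (c : ℤ) * r.1.1 - (b₃ : ℤ) * r.1.2 := by
    intro r
    rw [Int.toNat_of_nonneg]
    have := hkey r.1 r.2
    linarith
  have hsol : ∀ r : {r // r ∈ S'},
      ((b₂ * c : ℕ) : ℤ) * (x₀ + d * r.1.1) +
      ((d * b₂ : ℕ) : ℤ) * ((W - (c : ℤ) * r.1.1 - (b₃ : ℤ) * r.1.2).toNat) +
      ((d * b₃ : ℕ) : ℤ) * (z₀ + b₂ * r.1.2) = n := by
    intro r
    have h := hy r
    rw [hn]
    push_cast
    push_cast at h
    rw [h]
    ring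
  have hinj : Function.Injective (fun r : {r // r ∈ S'} =>
      (⟨(x₀ + d * r.1.1, (W - (c : ℤ) * r.1.1 - (b₃ : ℤ) * r.1.2).toNat, z₀ + b₂ * r.1.2),
        by push_cast; push_cast at hsol; exact hsol r⟩ :
        {p : ℕ × ℕ × ℕ //
          ((b₂ * c : ℕ) : ℤ) * p.1 + ((d * b₂ : ℕ) : ℤ) * p.2.1 + ((d * b₃ : ℕ) : ℤ) * p.2.2 = n})) := by
    intro r r' h
    simp only [Subtype.mk.injEq, Prod.mk.injEq] at h
    obtain ⟨h1, _, h3⟩ := h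
    have e1 : r.1.1 = r'.1.1 := by
      have := Nat.add_left_cancel h1
      exact Nat.eq_of_mul_eq_mul_left hd this
    have e2 : r.1.2 = r'.1.2 := by
      have := Nat.add_left_cancel h3
      exact Nat.eq_of_mul_eq_mul_left hb₂ this
    exact Subtype.ext (Prod.ext e1 e2)
  have := Nat.card_le_card_of_injective _ hinj
  rw [Nat.card_eq_finsetCard] at this
  rw [hcard] at this
  rw [d3]
  exact this

lemma main_lemma (d b₂ b₃ c s : ℕ) (hd : 0 < d) (hb₂ : 0 < b₂) (hb₃ : 0 < b₃) (hc : 0 < c)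
    (hcop1 : Nat.Coprime (b₂ * c) d) (hcop2 : Nat.Coprime b₂ b₃) :
    IsGreatest
      {n : ℤ | d3 (b₂ * c) (d * b₂) (d * b₃) n ≤ ∑ j ∈ Finset.range (s + 1), gfun b₃ c j}
      (((s : ℤ) + 1) * ((d : ℤ) * b₂ * b₃) + ((b₂ : ℤ) * c) * d - (b₂ : ℤ) * c
        - (d : ℤ) * b₂ - (d : ℤ) * b₃) := by
  set N : ℤ := ((s : ℤ) + 1) * ((d : ℤ) * b₂ * b₃) + ((b₂ : ℤ) * c) * d - (b₂ : ℤ) * c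
        - (d : ℤ) * b₂ - (d : ℤ) * b₃ with hN
  constructor
  · -- membership : d3 N ≤ T
    show d3 (b₂ * c) (d * b₂) (d * b₃) N ≤ _
    apply card_le d b₂ b₃ c s hd hb₂ hb₃ hc hcop1 hcop2 N (d - 1) (b₂ - 1) ((s : ℤ) * b₃ - 1)
      (by omega) (by omega)
    · rw [hN]
      push_cast [Nat.cast_sub hd, Nat.cast_sub hb₂]
      ring
    · exact le_rfl
  · -- upper bound
    intro n hmem
    simp only [Set.mem_setOf_eq] at hmem
    by_contra hcon
    push_neg at hcon
    -- decompose n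
    obtain ⟨x₀, hx₀lt, hx₀dvd⟩ := exists_res (b₂ * c) d hd hcop1 n
    have hcb₂d : Nat.Coprime b₂ d := Nat.Coprime.coprime_dvd_left (dvd_mul_right b₂ c) hcop1
    have hcop3 : Nat.Coprime (d * b₃) b₂ := Nat.Coprime.mul hcb₂d.symm hcop2.symm
    obtain ⟨z₀, hz₀lt, hz₀dvd⟩ := exists_res (d * b₃) b₂ hb₂ hcop3 n
    have hdvd : ((d : ℤ) * b₂) ∣ n - ((b₂ * c : ℕ) : ℤ) * x₀ - ((d * b₃ : ℕ) : ℤ) * z₀ := by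
      have hcopZ : IsCoprime (d : ℤ) (b₂ : ℤ) := by
        rw [Int.isCoprime_iff_gcd_eq_one]
        simpa [Int.gcd_natCast_natCast] using hcb₂d.symm
      apply hcopZ.mul_dvd
      · have h1 : (d : ℤ) ∣ ((d * b₃ : ℕ) : ℤ) * z₀ := ⟨(b₃ : ℤ) * z₀, by push_cast; ring⟩
        exact dvd_sub hx₀dvd h1
      · have h2 : (b₂ : ℤ) ∣ ((b₂ * c : ℕ) : ℤ) * x₀ := ⟨(c : ℤ) * x₀, by push_cast; ring⟩
        have h3 := dvd_sub hz₀dvd h2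
        convert h3 using 1
        ring
    obtain ⟨W, hWdef⟩ := hdvd
    have hn' : n = ((b₂ * c : ℕ) : ℤ) * x₀ + ((d * b₃ : ℕ) : ℤ) * z₀ + ((d * b₂ : ℕ) : ℤ) * W := by
      push_cast at hWdef ⊢
      linarith
    -- show W ≥ s * b₃
    have e1 : (x₀ : ℤ) ≤ (d : ℤ) - 1 := by omega
    have e2 : (z₀ : ℤ) ≤ (b₂ : ℤ) - 1 := by omega
    have hp1 : ((b₂ : ℤ) * c) * x₀ ≤ ((b₂ : ℤ) * c) * ((d : ℤ) - 1) :=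
      mul_le_mul_of_nonneg_left e1 (by positivity)
    have hp2 : ((d : ℤ) * b₃) * z₀ ≤ ((d : ℤ) * b₃) * ((b₂ : ℤ) - 1) :=
      mul_le_mul_of_nonneg_left e2 (by positivity)
    have hNn : N + 1 ≤ n := hcon
    have hCW : (d : ℤ) * b₂ * ((s : ℤ) * b₃ - 1) + 1 ≤ (d : ℤ) * b₂ * W := by
      push_cast at hn'
      rw [hN] at hNn
      nlinarith [hp1, hp2]
    have hWge : (s : ℤ) * b₃ ≤ W := by
      have hdb₂ : (0 : ℤ) < (d : ℤ) * b₂ := by positivity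
      by_contra hcw
      push_neg at hcw
      have : W ≤ (s : ℤ) * b₃ - 1 := by omega
      have := mul_le_mul_of_nonneg_left this (le_of_lt hdb₂)
      linarith
    have := card_ge d b₂ b₃ c s hd hb₂ hb₃ hc n x₀ z₀ W hn' hWge
    omega

lemma d3_swap (a b c : ℕ) (n : ℤ) : d3 a b c n = d3 a c b n := by
  rw [d3, d3]
  apply Nat.card_congr
  exact ⟨fun p => ⟨(p.1.1, p.1.2.2, p.1.2.1), by have := p.2; simp only at this ⊢; linarith⟩,
    fun p => ⟨(p.1.1, p.1.2.2, p.1.2.1), by have := p.2; simp only at this ⊢; linarith⟩,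
    fun p => rfl, fun p => rfl⟩

lemma ceil_helper (d₁ b b' c j : ℕ) (hd : 0 < d₁) (hb : 0 < b) (hc : 0 < c) :
    (⌈((j : ℚ) * ((d₁ * b : ℕ) : ℚ) * ((d₁ * b' : ℕ) : ℚ)) / (((b * c : ℕ) : ℚ) * (d₁ : ℚ) ^ 2)⌉).toNat
      = gfun b' c j := by
  rw [gfun]
  congr 2
  have hd' : (d₁ : ℚ) ≠ 0 := by positivity
  have hb' : (b : ℚ) ≠ 0 := by positivity
  have hc' : (c : ℚ) ≠ 0 := by positivity
  push_cast
  field_simp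

theorem stmt7 (a₁ a₂ a₃ : ℕ) (h₁ : 0 < a₁) (h₂ : 0 < a₂) (h₃ : 0 < a₃)
    (hgcd : Nat.gcd a₁ (Nat.gcd a₂ a₃) = 1)
    (d₁ : ℕ) (hd₁ : d₁ = Nat.gcd a₂ a₃)
    (hdvd : a₂ / d₁ ∣ a₁ ∨ a₃ / d₁ ∣ a₁) (s : ℕ) :
    IsGreatest
      {n : ℤ | d3 a₁ a₂ a₃ n ≤
        ∑ j ∈ Finset.range (s + 1), (⌈(j * a₂ * a₃ : ℚ) / (a₁ * d₁ ^ 2)⌉).toNat}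
      (((s : ℤ) + 1) * (a₂ * a₃) / d₁ + a₁ * d₁ - a₁ - a₂ - a₃) := by
  have hdpos : 0 < d₁ := hd₁ ▸ Nat.gcd_pos_of_pos_left _ h₂
  have hd2 : d₁ ∣ a₂ := hd₁ ▸ Nat.gcd_dvd_left _ _
  have hd3 : d₁ ∣ a₃ := hd₁ ▸ Nat.gcd_dvd_right _ _
  obtain ⟨b₂, ha₂⟩ := hd2
  obtain ⟨b₃, ha₃⟩ := hd3
  have hb₂d : a₂ / d₁ = b₂ := by rw [ha₂]; exact Nat.mul_div_cancel_left _ hdpos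
  have hb₃d : a₃ / d₁ = b₃ := by rw [ha₃]; exact Nat.mul_div_cancel_left _ hdpos
  have hb₂ : 0 < b₂ := Nat.pos_of_ne_zero (by rintro rfl; rw [ha₂, mul_zero] at h₂; exact lt_irrefl 0 h₂)
  have hb₃ : 0 < b₃ := Nat.pos_of_ne_zero (by rintro rfl; rw [ha₃, mul_zero] at h₃; exact lt_irrefl 0 h₃)
  have hcop23 : Nat.Coprime b₂ b₃ := by
    rw [← hb₂d, ← hb₃d, hd₁]
    exact Nat.coprime_div_gcd_div_gcd (hd₁ ▸ hdpos)
  have hcopa₁d : Nat.Coprime a₁ d₁ := by rw [hd₁]; exact hgcd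
  have hdne : (d₁ : ℤ) ≠ 0 := by exact_mod_cast hdpos.ne'
  rw [hb₂d, hb₃d] at hdvd
  rcases hdvd with hdv | hdv
  · -- case b₂ ∣ a₁
    obtain ⟨c, ha₁⟩ := hdv
    have hc : 0 < c := Nat.pos_of_ne_zero (by rintro rfl; rw [ha₁, mul_zero] at h₁; exact lt_irrefl 0 h₁)
    have hcop1 : Nat.Coprime (b₂ * c) d₁ := ha₁ ▸ hcopa₁d
    have H := main_lemma d₁ b₂ b₃ c s hdpos hb₂ hb₃ hc hcop1 hcop23
    have hset : {n : ℤ | d3 a₁ a₂ a₃ n ≤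
        ∑ j ∈ Finset.range (s + 1), (⌈(j * a₂ * a₃ : ℚ) / (a₁ * d₁ ^ 2)⌉).toNat}
        = {n : ℤ | d3 (b₂ * c) (d₁ * b₂) (d₁ * b₃) n ≤ ∑ j ∈ Finset.range (s + 1), gfun b₃ c j} := by
      ext n
      simp only [Set.mem_setOf_eq]
      rw [ha₁, ha₂, ha₃]
      rw [Finset.sum_congr rfl (fun j _ => ceil_helper d₁ b₂ b₃ c j hdpos hb₂ hc)]
    have hval : ((s : ℤ) + 1) * (a₂ * a₃) / d₁ + a₁ * d₁ - a₁ - a₂ - a₃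
        = ((s : ℤ) + 1) * ((d₁ : ℤ) * b₂ * b₃) + ((b₂ : ℤ) * c) * d₁ - (b₂ : ℤ) * c
          - (d₁ : ℤ) * b₂ - (d₁ : ℤ) * b₃ := by
      rw [ha₁, ha₂, ha₃]
      push_cast
      rw [show ((s : ℤ) + 1) * ((d₁ : ℤ) * b₂ * ((d₁ : ℤ) * b₃))
          = (((s : ℤ) + 1) * ((d₁ : ℤ) * b₂ * b₃)) * d₁ by ring,
        Int.mul_ediv_cancel _ hdne]
      try ring
    rw [hset, hval]
    exact H
  · -- case b₃ ∣ a₁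
    obtain ⟨c, ha₁⟩ := hdv
    have hc : 0 < c := Nat.pos_of_ne_zero (by rintro rfl; rw [ha₁, mul_zero] at h₁; exact lt_irrefl 0 h₁)
    have hcop1 : Nat.Coprime (b₃ * c) d₁ := ha₁ ▸ hcopa₁d
    have H := main_lemma d₁ b₃ b₂ c s hdpos hb₃ hb₂ hc hcop1 hcop23.symm
    have hset : {n : ℤ | d3 a₁ a₂ a₃ n ≤
        ∑ j ∈ Finset.range (s + 1), (⌈(j * a₂ * a₃ : ℚ) / (a₁ * d₁ ^ 2)⌉).toNat}
        = {n : ℤ | d3 (b₃ * c) (d₁ * b₃) (d₁ * b₂) n ≤ ∑ j ∈ Finset.range (s + 1), gfun b₂ c j} := by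
      ext n
      simp only [Set.mem_setOf_eq]
      rw [d3_swap, ha₁, ha₂, ha₃]
      have hterm : ∀ j : ℕ,
          (⌈((j : ℚ) * ((d₁ * b₂ : ℕ) : ℚ) * ((d₁ * b₃ : ℕ) : ℚ)) /
            (((b₃ * c : ℕ) : ℚ) * (d₁ : ℚ) ^ 2)⌉).toNat = gfun b₂ c j := by
        intro j
        rw [show ((j : ℚ) * ((d₁ * b₂ : ℕ) : ℚ) * ((d₁ * b₃ : ℕ) : ℚ))
            = ((j : ℚ) * ((d₁ * b₃ : ℕ) : ℚ) * ((d₁ * b₂ : ℕ) : ℚ)) by push_cast; ring]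
        exact ceil_helper d₁ b₃ b₂ c j hdpos hb₃ hc
      rw [Finset.sum_congr rfl (fun j _ => hterm j)]
    have hval : ((s : ℤ) + 1) * (a₂ * a₃) / d₁ + a₁ * d₁ - a₁ - a₂ - a₃
        = ((s : ℤ) + 1) * ((d₁ : ℤ) * b₃ * b₂) + ((b₃ : ℤ) * c) * d₁ - (b₃ : ℤ) * c
          - (d₁ : ℤ) * b₃ - (d₁ : ℤ) * b₂ := by
      rw [ha₁, ha₂, ha₃]
      push_cast
      rw [show ((s : ℤ) + 1) * ((d₁ : ℤ) * b₂ * ((d₁ : ℤ) * b₃))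
          = (((s : ℤ) + 1) * ((d₁ : ℤ) * b₃ * b₂)) * d₁ by ring,
        Int.mul_ediv_cancel _ hdne]
      try ring
    rw [hset, hval]
    exact H
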